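/- With u_0(n) = ln W(n) − 1/2 + (1/2)ln π − (n+1/3)·ln(1 − 1/(2(n+1/3))) + (1/2)ln n, the sequence n^3 · u_0(n) converges to 1/144 as n → ∞. -/

import Mathlib

open Real Filter Topology

/-- The Wallis ratio W(n) = (2n-1)!!/(2n)!!. -/
noncomputable def W (n : ℕ) : ℝ :=
  (∏ k ∈ Finset.range n, (2 * (k : ℝ) + 1)) / (∏ k ∈ Finset.range n, (2 * (k : ℝ) + 2))

noncomputable def u0 (n : ℕ) : ℝ :=
  Real.log (W n) - 1 / 2 + (1 / 2) * Real.log π -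
    ((n : ℝ) + 1 / 3) * Real.log (1 - 1 / (2 * ((n : ℝ) + 1 / 3))) +
    (1 / 2) * Real.log n

lemma W_pos (n : ℕ) : 0 < W n := by
  apply div_pos <;> (apply Finset.prod_pos; intro i _; positivity)

lemma W_succ (n : ℕ) : W (n + 1) = W n * ((2 * n + 1) / (2 * n + 2)) := by
  rw [W, W, Finset.prod_range_succ, Finset.prod_range_succ, div_mul_div_comm]

lemma wallis_eq (k : ℕ) :
    Real.Wallis.W k = 1 / (W k ^ 2 * (2 * k + 1)) := by
  induction k with
  | zero => simp [Real.Wallis.W, W]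
  | succ n ih =>
    rw [Real.Wallis.W_succ, ih, W_succ]
    have h1 : W n ≠ 0 := (W_pos n).ne'
    have h2 : (2 * (n:ℝ) + 1) ≠ 0 := by positivity
    have h3 : (2 * (n:ℝ) + 2) ≠ 0 := by positivity
    have h4 : (2 * (n:ℝ) + 3) ≠ 0 := by positivity
    push_cast
    field_simp
    ring

lemma tendsto_WW : Tendsto (fun k : ℕ => W k ^ 2 * (2 * (k:ℝ) + 1)) atTop (𝓝 (2 / π)) := by
  have h := Real.Wallis.tendsto_W_nhds_pi_div_two.inv₀ (by positivity : (π/2) ≠ 0)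
  rw [inv_div] at h
  apply h.congr
  intro k
  rw [wallis_eq, one_div, inv_inv]

noncomputable def v (n : ℕ) : ℝ := Real.log (W n) + Real.log (π * n) / 2

lemma tendsto_v : Tendsto v atTop (𝓝 0) := by
  have hq : Tendsto (fun k : ℕ => π * (k:ℝ) / (2 * k + 1)) atTop (𝓝 (π / 2)) := by
    have hd : Tendsto (fun k : ℕ => 2 + 1 / (k:ℝ)) atTop (𝓝 2) := by
      simpa using tendsto_const_nhds.add (tendsto_one_div_atTop_nhds_zero_nat (𝕜 := ℝ))
    have h := (tendsto_const_nhds (x := π)).div hd two_ne_zero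
    apply h.congr'
    filter_upwards [eventually_ge_atTop 1] with k hk
    have hk0 : (k:ℝ) ≠ 0 := by positivity
    show π / (2 + 1/(k:ℝ)) = _
    rw [div_eq_div_iff (by positivity) (by positivity)]
    field_simp
  have hP : Tendsto (fun k : ℕ => W k ^ 2 * (π * (k:ℝ))) atTop (𝓝 1) := by
    have h := tendsto_WW.mul hq
    have he : (2 / π) * (π / 2) = 1 := by
      field_simp
    rw [he] at h
    apply h.congr
    intro k
    have : (2 * (k:ℝ) + 1) ≠ 0 := by positivity
    field_simp
  have hlog : Tendsto (fun n : ℕ => Real.log (W n ^ 2 * (π * n))) atTop (𝓝 0) := by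
    simpa using hP.log one_ne_zero
  have h0 : (0:ℝ) = 0/2 := by norm_num
  rw [h0]
  apply (hlog.div_const 2).congr'
  filter_upwards [eventually_ge_atTop 1] with n hn
  have hn0 : (n:ℝ) ≠ 0 := by positivity
  rw [Real.log_mul (pow_ne_zero 2 (W_pos n).ne') (by positivity), Real.log_pow, v]
  push_cast
  ring

lemma taylor_log (z : ℝ) (h0 : 0 ≤ z) (h1 : z < 1) :
    |Real.log (1 - z) + (z + z^2/2 + z^3/3 + z^4/4)| ≤ z^5/(1-z) := by
  have h := Real.abs_log_sub_add_sum_range_le (x := z) (by rwa [abs_of_nonneg h0]) 4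
  rw [abs_of_nonneg h0] at h
  have hs : (∑ i ∈ Finset.range 4, z ^ (i + 1) / (i + 1)) = z + z^2/2 + z^3/3 + z^4/4 := by
    simp [Finset.sum_range_succ]
    norm_num
  rw [hs] at h
  calc |Real.log (1 - z) + (z + z^2/2 + z^3/3 + z^4/4)|
      = |z + z^2/2 + z^3/3 + z^4/4 + Real.log (1 - z)| := by rw [add_comm]
    _ ≤ z^5/(1-z) := h

noncomputable def phi (x : ℝ) : ℝ := -(1/(8*x)) + 1/(192*x^3)
noncomputable def Dd (x : ℝ) : ℝ := 1/x^4

set_option maxHeartbeats 2000000 in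
lemma fk_bound (x : ℝ) (hx : 1 ≤ x) :
    |(-Real.log ((2*x+1)/(2*x+2)) + Real.log (x/(x+1))/2) - (phi x - phi (x+1))|
      ≤ Dd x - Dd (x+1) := by
  have hx0 : (0:ℝ) < x := lt_of_lt_of_le one_pos hx
  have hx1 : (0:ℝ) < x + 1 := by linarith
  have h2x1 : (0:ℝ) < 2*x+1 := by linarith
  have h2x2 : (0:ℝ) < 2*x+2 := by linarith
  have ht : (0:ℝ) ≤ x - 1 := by linarith
  have e1 : (1:ℝ) - 1/(2*(x+1)) = (2*x+1)/(2*x+2) := by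
    field_simp; ring
  have e2 : (1:ℝ) - 1/(x+1) = x/(x+1) := by
    field_simp
    ring
  have t1 := taylor_log (1/(2*(x+1))) (by positivity) (by
    rw [div_lt_one (by positivity)]; linarith)
  have t2 := taylor_log (1/(x+1)) (by positivity) (by
    rw [div_lt_one (by positivity)]; linarith)
  rw [e1] at t1
  rw [e2] at t2
  set P1 : ℝ := (1/(2*(x+1)) + (1/(2*(x+1)))^2/2 + (1/(2*(x+1)))^3/3 + (1/(2*(x+1)))^4/4) with hP1
  set P2 : ℝ := (1/(x+1) + (1/(x+1))^2/2 + (1/(x+1))^3/3 + (1/(x+1))^4/4) with hP2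
  have key : (-Real.log ((2*x+1)/(2*x+2)) + Real.log (x/(x+1))/2) - (phi x - phi (x+1))
      = ((P1 - P2/2) - (phi x - phi (x+1)))
        - (Real.log ((2*x+1)/(2*x+2)) + P1)
        + (Real.log (x/(x+1)) + P2)/2 := by ring
  rw [key]
  have tri : |((P1 - P2/2) - (phi x - phi (x+1)))
        - (Real.log ((2*x+1)/(2*x+2)) + P1)
        + (Real.log (x/(x+1)) + P2)/2|
      ≤ |(P1 - P2/2) - (phi x - phi (x+1))|
        + |Real.log ((2*x+1)/(2*x+2)) + P1|
        + |Real.log (x/(x+1)) + P2|/2 := by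
    calc _ ≤ |((P1 - P2/2) - (phi x - phi (x+1))) - (Real.log ((2*x+1)/(2*x+2)) + P1)|
            + |(Real.log (x/(x+1)) + P2)/2| := abs_add_le _ _
    _ ≤ _ := by
        rw [abs_div, abs_two]
        exact add_le_add_left (abs_sub _ _) _
  refine tri.trans ?_
  have hmain : |(P1 - P2/2) - (phi x - phi (x+1))|
      ≤ (Dd x - Dd (x+1)) - (1/(2*(x+1)))^5/((2*x+1)/(2*x+2))
        - ((1/(x+1))^5/(x/(x+1)))/2 := by
    rw [abs_le]
    constructor
    · have idf : ((Dd x - Dd (x+1)) - (1/(2*(x+1)))^5/((2*x+1)/(2*x+2))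
          - ((1/(x+1))^5/(x/(x+1)))/2) + ((P1 - P2/2) - (phi x - phi (x+1)))
          = (16758 + 50269*(x-1) + 60641*(x-1)^2 + 36764*(x-1)^3 + 11194*(x-1)^4
              + 1368*(x-1)^5) / (192*x^4*(x+1)^5*(2*x+1)) := by
        rw [hP1, hP2, phi, phi, Dd, Dd]
        field_simp
        ring
      have hnum : (0:ℝ) ≤ 16758 + 50269*(x-1) + 60641*(x-1)^2 + 36764*(x-1)^3
          + 11194*(x-1)^4 + 1368*(x-1)^5 := by
        have h2 := pow_nonneg ht 2
        have h3 := pow_nonneg ht 3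
        have h4 := pow_nonneg ht 4
        have h5 := pow_nonneg ht 5
        nlinarith
      nlinarith [div_nonneg hnum (by positivity : (0:ℝ) ≤ 192*x^4*(x+1)^5*(2*x+1)), idf]
    · have idf : ((Dd x - Dd (x+1)) - (1/(2*(x+1)))^5/((2*x+1)/(2*x+2))
          - ((1/(x+1))^5/(x/(x+1)))/2) - ((P1 - P2/2) - (phi x - phi (x+1)))
          = (16602 + 49547*(x-1) + 59359*(x-1)^2 + 35668*(x-1)^3 + 10742*(x-1)^4
              + 1296*(x-1)^5) / (192*x^4*(x+1)^5*(2*x+1)) := by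
        rw [hP1, hP2, phi, phi, Dd, Dd]
        field_simp
        ring
      have hnum : (0:ℝ) ≤ 16602 + 49547*(x-1) + 59359*(x-1)^2 + 35668*(x-1)^3
          + 10742*(x-1)^4 + 1296*(x-1)^5 := by
        have h2 := pow_nonneg ht 2
        have h3 := pow_nonneg ht 3
        have h4 := pow_nonneg ht 4
        have h5 := pow_nonneg ht 5
        nlinarith
      nlinarith [div_nonneg hnum (by positivity : (0:ℝ) ≤ 192*x^4*(x+1)^5*(2*x+1)), idf]
  linarith [hmain, t1, t2]

lemma v_diff (k : ℕ) (hk : 1 ≤ k) :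
    v k - v (k+1) = -Real.log ((2*(k:ℝ)+1)/(2*(k:ℝ)+2)) + Real.log ((k:ℝ)/((k:ℝ)+1))/2 := by
  have hk0 : (0:ℝ) < k := by exact_mod_cast hk
  have h1 : W (k+1) = W k * ((2*(k:ℝ)+1)/(2*(k:ℝ)+2)) := W_succ k
  rw [v, v, h1]
  push_cast
  rw [Real.log_mul (W_pos k).ne' (by positivity),
    Real.log_div (by positivity) (by positivity),
    Real.log_mul (Real.pi_ne_zero) (by positivity : ((k:ℝ)) ≠ 0),
    Real.log_mul (Real.pi_ne_zero) (by positivity : ((k:ℝ)+1) ≠ 0),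
    Real.log_div (by positivity : ((k:ℝ)) ≠ 0) (by positivity : ((k:ℝ)+1) ≠ 0)]
  ring

lemma tele (n : ℕ) (hn : 1 ≤ n) : ∀ N, n ≤ N →
    |(v n - phi n) - (v N - phi N)| ≤ Dd n - Dd N := by
  intro N hnN
  induction N, hnN using Nat.le_induction with
  | base => simp
  | succ N hN ih =>
    have hN1 : 1 ≤ N := le_trans hn hN
    have hN1' : (1:ℝ) ≤ (N:ℝ) := by exact_mod_cast hN1
    have step : |(v N - phi (N:ℝ)) - (v (N+1) - phi ((N:ℝ)+1))| ≤ Dd (N:ℝ) - Dd ((N:ℝ)+1) := by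
      have hd := v_diff N hN1
      have hb := fk_bound (N:ℝ) hN1'
      have : (v N - phi (N:ℝ)) - (v (N+1) - phi ((N:ℝ)+1)) =
          ((-Real.log ((2*(N:ℝ)+1)/(2*(N:ℝ)+2)) + Real.log ((N:ℝ)/((N:ℝ)+1))/2)
            - (phi (N:ℝ) - phi ((N:ℝ)+1))) := by
        rw [← hd]; ring
      rw [this]
      exact hb
    push_cast
    calc |(v n - phi n) - (v (N+1) - phi ((N:ℝ)+1))|
        ≤ |(v n - phi n) - (v N - phi N)| + |(v N - phi N) - (v (N+1) - phi ((N:ℝ)+1))| :=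
          abs_sub_le _ _ _
      _ ≤ (Dd n - Dd N) + (Dd N - Dd ((N:ℝ)+1)) := add_le_add ih step
      _ = Dd n - Dd ((N:ℝ)+1) := by ring

lemma phi_tendsto : Tendsto (fun N : ℕ => phi N) atTop (𝓝 0) := by
  have t0 := tendsto_one_div_atTop_nhds_zero_nat (𝕜 := ℝ)
  have h : Tendsto (fun N : ℕ => -(1/8) * (1/(N:ℝ)) + (1/192) * (1/(N:ℝ))^3) atTop
      (𝓝 (-(1/8) * 0 + (1/192) * 0^3)) := by
    exact ((t0.const_mul _).add ((t0.pow 3).const_mul _)).congr (by intro n; ring)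
  norm_num at h
  apply h.congr
  intro N
  rw [phi]
  ring

lemma Dd_tendsto : Tendsto (fun N : ℕ => Dd N) atTop (𝓝 0) := by
  have t0 := tendsto_one_div_atTop_nhds_zero_nat (𝕜 := ℝ)
  have h : Tendsto (fun N : ℕ => (1/(N:ℝ))^4) atTop (𝓝 (0^4)) := t0.pow 4
  norm_num at h
  apply h.congr
  intro N
  rw [Dd]
  ring

lemma v_phi_bound (n : ℕ) (hn : 1 ≤ n) : |v n - phi n| ≤ Dd n := by
  have h1 : Tendsto (fun N : ℕ => (v n - phi n) - (v N - phi N)) atTop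
      (𝓝 ((v n - phi n) - (0 - 0))) :=
    tendsto_const_nhds.sub (tendsto_v.sub phi_tendsto)
  rw [sub_zero] at h1
  have h2 := h1.abs
  rw [sub_zero] at h2
  apply le_of_tendsto h2
  filter_upwards [eventually_ge_atTop n] with N hN
  have hDd : 0 ≤ Dd (N:ℝ) := by rw [Dd]; positivity
  have := tele n hn N hN
  linarith

set_option maxHeartbeats 2000000 in
lemma key_real (x V L : ℝ) (hx : 1 ≤ x)
    (hV : |V - phi x| ≤ Dd x)
    (hL : |L + (1/(2*(x+1/3)) + (1/(2*(x+1/3)))^2/2 + (1/(2*(x+1/3)))^3/3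
        + (1/(2*(x+1/3)))^4/4)| ≤ (1/(2*(x+1/3)))^5/(1-1/(2*(x+1/3)))) :
    |x^3 * (V - 1/2 - (x+1/3)*L) - 1/144| ≤ 2/x := by
  have hx0 : (0:ℝ) < x := lt_of_lt_of_le one_pos hx
  have hm0 : (0:ℝ) < x + 1/3 := by linarith
  have hmne : x + 1/3 ≠ 0 := hm0.ne'
  have ht : (0:ℝ) ≤ x - 1 := by linarith
  have hz1 : 1/(2*(x+1/3)) < 1 := by
    rw [div_lt_one (by linarith)]; linarith
  have hδ2 : (1/(2*(x+1/3)))^5/(1-1/(2*(x+1/3))) ≤ 2*(1/(2*(x+1/3)))^5 := by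
    rw [div_le_iff₀ (by
      have : 1/(2*(x+1/3)) ≤ 1/2 := by
        rw [div_le_div_iff₀ (by linarith) (by norm_num)]; linarith
      linarith)]
    have h5 : (0:ℝ) ≤ (1/(2*(x+1/3)))^5 := by positivity
    have : 1/(2*(x+1/3)) ≤ 1/2 := by
      rw [div_le_div_iff₀ (by linarith) (by norm_num)]; linarith
    nlinarith
  have hLb : |L + (1/(2*(x+1/3)) + (1/(2*(x+1/3)))^2/2 + (1/(2*(x+1/3)))^3/3
      + (1/(2*(x+1/3)))^4/4)| ≤ 2*(1/(2*(x+1/3)))^5 := hL.trans hδ2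
  have hq : (x+1/3) * (1/(2*(x+1/3)) + (1/(2*(x+1/3)))^2/2 + (1/(2*(x+1/3)))^3/3
      + (1/(2*(x+1/3)))^4/4)
      = 1/2 + 1/(8*(x+1/3)) + 1/(24*(x+1/3)^2) + 1/(64*(x+1/3)^3) := by
    field_simp
    ring
  have hsplit : x^3 * (V - 1/2 - (x+1/3)*L) - 1/144 =
      x^3 * (V - phi x)
      + (x^3 * (phi x + 1/(8*(x+1/3)) + 1/(24*(x+1/3)^2) + 1/(64*(x+1/3)^3)) - 1/144)
      - x^3 * (x+1/3) * (L + (1/(2*(x+1/3)) + (1/(2*(x+1/3)))^2/2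
          + (1/(2*(x+1/3)))^3/3 + (1/(2*(x+1/3)))^4/4)) := by
    linear_combination (x^3) * hq
  rw [hsplit]
  have b1 : |x^3 * (V - phi x)| ≤ 1/x := by
    rw [abs_mul, abs_of_nonneg (by positivity : (0:ℝ) ≤ x^3)]
    calc x^3 * |V - phi x| ≤ x^3 * Dd x :=
          mul_le_mul_of_nonneg_left hV (by positivity)
      _ = 1/x := by rw [Dd]; field_simp
  have b3 : |x^3 * (x+1/3) * (L + (1/(2*(x+1/3)) + (1/(2*(x+1/3)))^2/2
      + (1/(2*(x+1/3)))^3/3 + (1/(2*(x+1/3)))^4/4))| ≤ 1/(16*x) := by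
    rw [abs_mul, abs_of_nonneg (by positivity : (0:ℝ) ≤ x^3*(x+1/3))]
    calc x^3*(x+1/3) * |L + (1/(2*(x+1/3)) + (1/(2*(x+1/3)))^2/2
        + (1/(2*(x+1/3)))^3/3 + (1/(2*(x+1/3)))^4/4)|
        ≤ x^3*(x+1/3) * (2*(1/(2*(x+1/3)))^5) :=
          mul_le_mul_of_nonneg_left hLb (by positivity)
      _ = x^3/(16*(x+1/3)^4) := by field_simp; ring
      _ ≤ 1/(16*x) := by
          rw [div_le_div_iff₀ (by positivity) (by positivity)]
          nlinarith [pow_le_pow_left₀ (le_of_lt hx0) (show x ≤ x+1/3 by linarith) 4]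
  have b2 : |x^3 * (phi x + 1/(8*(x+1/3)) + 1/(24*(x+1/3)^2) + 1/(64*(x+1/3)^3)) - 1/144|
      ≤ 1/(16*x) := by
    rw [abs_le]
    constructor
    · have idf : (x^3 * (phi x + 1/(8*(x+1/3)) + 1/(24*(x+1/3)^2) + 1/(64*(x+1/3)^3))
            - 1/144) + 1/(16*x)
          = (2195 + 4868*(x-1) + 3582*(x-1)^2 + 873*(x-1)^3) / (576*x*(3*x+1)^3) := by
        rw [phi]
        have h31 : (3*x+1) ≠ 0 := by linarith
        field_simp
        ring
      have hnum : (0:ℝ) ≤ 2195 + 4868*(x-1) + 3582*(x-1)^2 + 873*(x-1)^3 := by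
        have h2 := pow_nonneg ht 2
        have h3 := pow_nonneg ht 3
        nlinarith
      nlinarith [div_nonneg hnum (by positivity : (0:ℝ) ≤ 576*x*(3*x+1)^3), idf]
    · have idf : 1/(16*x) - (x^3 * (phi x + 1/(8*(x+1/3)) + 1/(24*(x+1/3)^2)
            + 1/(64*(x+1/3)^3)) - 1/144)
          = (2413 + 5500*(x-1) + 4194*(x-1)^2 + 1071*(x-1)^3) / (576*x*(3*x+1)^3) := by
        rw [phi]
        have h31 : (3*x+1) ≠ 0 := by linarith
        field_simp
        ring
      have hnum : (0:ℝ) ≤ 2413 + 5500*(x-1) + 4194*(x-1)^2 + 1071*(x-1)^3 := by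
        have h2 := pow_nonneg ht 2
        have h3 := pow_nonneg ht 3
        nlinarith
      nlinarith [div_nonneg hnum (by positivity : (0:ℝ) ≤ 576*x*(3*x+1)^3), idf]
  have tri : |x^3 * (V - phi x)
      + (x^3 * (phi x + 1/(8*(x+1/3)) + 1/(24*(x+1/3)^2) + 1/(64*(x+1/3)^3)) - 1/144)
      - x^3 * (x+1/3) * (L + (1/(2*(x+1/3)) + (1/(2*(x+1/3)))^2/2
          + (1/(2*(x+1/3)))^3/3 + (1/(2*(x+1/3)))^4/4))|
      ≤ |x^3 * (V - phi x)|
      + |x^3 * (phi x + 1/(8*(x+1/3)) + 1/(24*(x+1/3)^2) + 1/(64*(x+1/3)^3)) - 1/144|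
      + |x^3 * (x+1/3) * (L + (1/(2*(x+1/3)) + (1/(2*(x+1/3)))^2/2
          + (1/(2*(x+1/3)))^3/3 + (1/(2*(x+1/3)))^4/4))| := by
    calc _ ≤ |x^3 * (V - phi x)
        + (x^3 * (phi x + 1/(8*(x+1/3)) + 1/(24*(x+1/3)^2) + 1/(64*(x+1/3)^3)) - 1/144)|
        + |x^3 * (x+1/3) * (L + (1/(2*(x+1/3)) + (1/(2*(x+1/3)))^2/2
          + (1/(2*(x+1/3)))^3/3 + (1/(2*(x+1/3)))^4/4))| := abs_sub _ _
    _ ≤ _ := add_le_add_left (abs_add_le _ _) _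
  have hfin : 1/x + 1/(16*x) + 1/(16*x) ≤ 2/x := by
    rw [show 1/x + 1/(16*x) + 1/(16*x) = (9/8)/x by ring, div_le_div_iff₀ hx0 hx0]
    nlinarith
  calc _ ≤ _ := tri
  _ ≤ 1/x + 1/(16*x) + 1/(16*x) := by linarith [b1, b2, b3]
  _ ≤ 2/x := hfin

theorem u0_limit :
    Tendsto (fun n : ℕ => (n : ℝ) ^ 3 * u0 n) atTop (nhds (1 / 144)) := by
  have key : ∀ᶠ n : ℕ in atTop, |(n:ℝ)^3 * u0 n - 1/144| ≤ 2/(n:ℝ) := by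
    filter_upwards [eventually_ge_atTop 1] with n hn
    have hx : (1:ℝ) ≤ (n:ℝ) := by exact_mod_cast hn
    have hn0 : ((n:ℝ)) ≠ 0 := by positivity
    have hu : u0 n = v n - 1/2 - ((n:ℝ)+1/3) * Real.log (1 - 1/(2*((n:ℝ)+1/3))) := by
      rw [u0, v, Real.log_mul Real.pi_ne_zero hn0]; ring
    have hz0 : (0:ℝ) ≤ 1/(2*((n:ℝ)+1/3)) := by positivity
    have hz1 : 1/(2*((n:ℝ)+1/3)) < 1 := by
      rw [div_lt_one (by linarith)]; linarith
    have hL := taylor_log (1/(2*((n:ℝ)+1/3))) hz0 hz1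
    have h := key_real (n:ℝ) (v n) (Real.log (1 - 1/(2*((n:ℝ)+1/3)))) hx
      (v_phi_bound n hn) hL
    rw [← hu] at h
    exact h
  have h2 : Tendsto (fun n : ℕ => 2/(n:ℝ)) atTop (𝓝 0) := by
    have := tendsto_one_div_atTop_nhds_zero_nat.const_mul (2:ℝ)
    simpa [mul_one_div, div_eq_mul_inv] using this
  have habs : Tendsto (fun n : ℕ => |(n:ℝ)^3 * u0 n - 1/144|) atTop (𝓝 0) :=
    squeeze_zero' (Eventually.of_forall fun n => abs_nonneg _) key h2
  rw [tendsto_iff_dist_tendsto_zero]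
  simpa [Real.dist_eq] using habs
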